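/- For the Hata skew product with p = 1/2 and for every n ≥ 1, every measurable A ⊆ Ω and every Borel B ⊆ [0,1]: μ̃(J̃_n ∩ R̃^± ∩ T̃^{-n}(A×B)) = c_n · P(A) · μ(B ∩ I_0^±), and consequently μ̃(J̃_n ∩ T̃^{-n}(A×B)) = c_n · P(A) · μ(B ∩ J), where c_n = Σ_{k≥1} (2^{k+1}−1)·2^{-k}·P(φ^W_{−k} = n). -/

import Mathlib

open MeasureTheory Set
open scoped ENNReal

noncomputable section

/-- First Hata map: `τ₁(x) = x/2` on `(0,1/2)`, `τ₁(x) = 2x-1` on `(1/2,1)`. -/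
def tau1 : ℝ → ℝ := fun x => if x < 1/2 then x/2 else 2*x - 1

/-- Second Hata map: `τ₂(x) = 2x` on `(0,1/2)`, `τ₂(x) = (x+1)/2` on `(1/2,1)`. -/
def tau2 : ℝ → ℝ := fun x => if x < 1/2 then 2*x else (x+1)/2

/-- The interval `I_k^- = (2^{-(k+2)}, 2^{-(k+1)})`. -/
def Im (k : ℕ) : Set ℝ := Set.Ioo ((1:ℝ)/2^(k+2)) ((1:ℝ)/2^(k+1))

/-- The interval `I_k^+ = (1-2^{-(k+1)}, 1-2^{-(k+2)})`. -/
def Ip (k : ℕ) : Set ℝ := Set.Ioo (1 - (1:ℝ)/2^(k+1)) (1 - (1:ℝ)/2^(k+2))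

/-- The density `h` of the invariant measure: `h = 2^{k+1}-1` on `I_k^- ∪ I_k^+`. -/
def hataDensity : ℝ → ℝ≥0∞ :=
  fun x => ∑' k : ℕ, ((2:ℝ≥0∞)^(k+1) - 1) * Set.indicator (Im k ∪ Ip k) (fun _ => (1:ℝ≥0∞)) x

/-- The invariant measure `μ` of the Hata map, `μ(dx) = h(x) dx`. -/
def muH : Measure ℝ := volume.withDensity hataDensity

/-- The sample space of coin flips: `Ω = {1,2}^ℕ`, coded by `Bool` (`true` ↦ `τ₁`). -/
abbrev Om : Type := ℕ → Bool

/-- Selection of the map according to a coin flip. -/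
def sel : Bool → ℝ → ℝ := fun b => if b then tau1 else tau2

/-- The skew product `T̃(ω,x) = (θω, τ_{ω₁}(x))`, with `θ` the left shift. -/
def Ttilde : Om × ℝ → Om × ℝ := fun q => (fun n => q.1 (n+1), sel (q.1 0) q.2)

/-- The junction `J = (1/4,3/4)`. -/
def J : Set ℝ := Set.Ioo (1/4 : ℝ) (3/4)

/-- The ray `R^- = (0,1/4)`. -/
def Rm : Set ℝ := Set.Ioo (0 : ℝ) (1/4)

/-- The ray `R^+ = (3/4,1)`. -/
def Rp : Set ℝ := Set.Ioo (3/4 : ℝ) 1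

/-- `J̃ = Ω × J`. -/
def Jt : Set (Om × ℝ) := Set.univ ×ˢ J

/-- `J̃_n = J̃ᶜ ∩ {φ_{J̃} = n}`: the set of points outside `J̃` whose first entrance time
to `J̃` equals `n`. -/
def Jn (n : ℕ) : Set (Om × ℝ) :=
  {q | q ∉ Jt ∧ Ttilde^[n] q ∈ Jt ∧ ∀ m : ℕ, 1 ≤ m → m < n → Ttilde^[m] q ∉ Jt}

/-- The simple symmetric random walk driven by the coin flips:
`W_n = ε₁ + ⋯ + ε_n` with `ε_i = ±1`. -/
def W (ω : Om) (n : ℕ) : ℤ := ∑ i ∈ Finset.range n, (if ω i then (1:ℤ) else -1)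

/-- The event that the first hitting time of `-k` by the random walk equals `n`,
i.e. `{φ^W_{-k} = n}`. -/
def hitW (k n : ℕ) : Set Om :=
  {ω : Om | W ω n = -(k:ℤ) ∧ ∀ m : ℕ, 1 ≤ m → m < n → W ω m ≠ -(k:ℤ)}

/-- `c_n = ∑_{k≥1} (2^{k+1}-1)·2^{-k}·P(φ^W_{-k} = n)`. -/
def cH (P : Measure Om) (n : ℕ) : ℝ≥0∞ :=
  ∑' k : ℕ, (((2:ℝ≥0∞)^(k+2) - 1) / 2^(k+1)) * P (hitW (k+1) n)

-- basic numeric facts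
lemma two_pow_anti {a b : ℕ} (h : a ≤ b) : (1:ℝ)/2^b ≤ 1/2^a := by
  apply div_le_div_of_nonneg_left (by norm_num) (by positivity)
  exact pow_le_pow_right₀ (by norm_num) h

lemma Im_subset_Ioo (k : ℕ) : Im k ⊆ Set.Ioo (0:ℝ) (1/2^(k+1)) := fun x hx =>
  ⟨lt_trans (by positivity) hx.1, hx.2⟩

lemma Ip_subset_Ioo (k : ℕ) : Ip k ⊆ Set.Ioo (1 - (1:ℝ)/2^(k+1)) 1 := fun x hx =>
  ⟨hx.1, lt_of_lt_of_le hx.2 (by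
    have : (0:ℝ) < 1/2^(k+2) := by positivity
    linarith)⟩

lemma Im_lt_half {k : ℕ} {x : ℝ} (hx : x ∈ Im k) : x < 1/2 := by
  have := hx.2
  have h2 : (1:ℝ)/2^(k+1) ≤ 1/2^1 := two_pow_anti (by omega)
  rw [pow_one] at h2; linarith

lemma Ip_ge_half {k : ℕ} {x : ℝ} (hx : x ∈ Ip k) : ¬ x < 1/2 := by
  have := hx.1
  have h2 : (1:ℝ)/2^(k+1) ≤ 1/2^1 := two_pow_anti (by omega)
  rw [pow_one] at h2; linarith

lemma Im_pos {k : ℕ} {x : ℝ} (hx : x ∈ Im k) : 0 < x := lt_trans (by positivity) hx.1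

-- disjointness
lemma Im_disjoint {j k : ℕ} (h : j ≠ k) : Disjoint (Im j) (Im k) := by
  wlog hlt : j < k generalizing j k
  · exact (this h.symm (by omega)).symm
  refine Set.disjoint_left.mpr fun x hxj hxk => ?_
  have h1 : x < (1:ℝ)/2^(k+1) := hxk.2
  have h2 : (1:ℝ)/2^(j+2) < x := hxj.1
  have : (1:ℝ)/2^(k+1) ≤ 1/2^(j+2) := two_pow_anti (by omega)
  linarith

lemma Im_Ip_disjoint (j k : ℕ) : Disjoint (Im j) (Ip k) := by
  refine Set.disjoint_left.mpr fun x hxj hxk => ?_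
  have := Im_lt_half hxj
  exact Ip_ge_half hxk this

lemma Ip_disjoint {j k : ℕ} (h : j ≠ k) : Disjoint (Ip j) (Ip k) := by
  wlog hlt : j < k generalizing j k
  · exact (this h.symm (by omega)).symm
  refine Set.disjoint_left.mpr fun x hxj hxk => ?_
  have h1 : 1 - (1:ℝ)/2^(k+1) < x := hxk.1
  have h2 : x < 1 - (1:ℝ)/2^(j+2) := hxj.2
  have : (1:ℝ)/2^(k+1) ≤ 1/2^(j+2) := two_pow_anti (by omega)
  linarith

lemma ImIp_disjoint {j k : ℕ} (h : j ≠ k) : Disjoint (Im j ∪ Ip j) (Im k ∪ Ip k) := by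
  simp only [Set.disjoint_union_left, Set.disjoint_union_right]
  exact ⟨⟨Im_disjoint h, (Im_Ip_disjoint k j).symm⟩, ⟨Im_Ip_disjoint j k, Ip_disjoint h⟩⟩

lemma hataDensity_eq_on {k : ℕ} {x : ℝ} (hx : x ∈ Im k ∪ Ip k) :
    hataDensity x = (2:ℝ≥0∞)^(k+1) - 1 := by
  unfold hataDensity
  rw [tsum_eq_single k]
  · rw [Set.indicator_of_mem hx, mul_one]
  · intro j hj
    rw [Set.indicator_of_notMem, mul_zero]
    exact fun hxj => Set.disjoint_left.mp (ImIp_disjoint hj) hxj hx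

lemma measurableSet_Im (k : ℕ) : MeasurableSet (Im k) := measurableSet_Ioo
lemma measurableSet_Ip (k : ℕ) : MeasurableSet (Ip k) := measurableSet_Ioo

lemma muH_apply_subset_Im {k : ℕ} {S : Set ℝ} (hS : MeasurableSet S) (hsub : S ⊆ Im k) :
    muH S = ((2:ℝ≥0∞)^(k+1) - 1) * volume S := by
  rw [muH, withDensity_apply _ hS]
  rw [setLIntegral_congr_fun hS (fun x hx =>
    hataDensity_eq_on (Set.mem_union_left _ (hsub hx)))]
  simp [lintegral_const, Measure.restrict_apply MeasurableSet.univ]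

lemma muH_apply_subset_Ip {k : ℕ} {S : Set ℝ} (hS : MeasurableSet S) (hsub : S ⊆ Ip k) :
    muH S = ((2:ℝ≥0∞)^(k+1) - 1) * volume S := by
  rw [muH, withDensity_apply _ hS]
  rw [setLIntegral_congr_fun hS (fun x hx =>
    hataDensity_eq_on (Set.mem_union_right _ (hsub hx)))]
  simp [lintegral_const, Measure.restrict_apply MeasurableSet.univ]

lemma muH_ac : muH ≪ volume := withDensity_absolutelyContinuous _ _

lemma muH_countable_null {S : Set ℝ} (hS : S.Countable) : muH S = 0 :=
  muH_ac (hS.measure_zero _)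

-- step lemmas
lemma half_lemma (d : ℕ) : (1:ℝ)/2^(d+1)/2 = 1/2^(d+2) := by rw [pow_succ]; ring

lemma Im_tau1 {d : ℕ} {x : ℝ} (hx : x ∈ Im d) : tau1 x = x/2 ∧ x/2 ∈ Im (d+1) := by
  refine ⟨if_pos (Im_lt_half hx), ?_, ?_⟩
  · rw [← half_lemma (d+1)]; exact div_lt_div_of_pos_right hx.1 two_pos
  · rw [← half_lemma d]; exact div_lt_div_of_pos_right hx.2 two_pos

lemma Im_tau2 {d : ℕ} {x : ℝ} (hx : x ∈ Im (d+1)) : tau2 x = 2*x ∧ 2*x ∈ Im d := by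
  refine ⟨if_pos (Im_lt_half hx), ?_, ?_⟩
  · have := hx.1; rw [← half_lemma (d+1)] at this; linarith
  · have := hx.2; rw [← half_lemma d] at this; linarith

lemma Ip_tau1 {d : ℕ} {x : ℝ} (hx : x ∈ Ip (d+1)) : tau1 x = 2*x - 1 ∧ 2*x - 1 ∈ Ip d := by
  refine ⟨if_neg (Ip_ge_half hx), ?_, ?_⟩
  · have := hx.1; rw [← half_lemma d] at this; linarith
  · have := hx.2; rw [← half_lemma (d+1)] at this; linarith

lemma Ip_tau2 {d : ℕ} {x : ℝ} (hx : x ∈ Ip d) : tau2 x = (x+1)/2 ∧ (x+1)/2 ∈ Ip (d+1) := by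
  refine ⟨if_neg (Ip_ge_half hx), ?_, ?_⟩
  · have := hx.1; rw [← half_lemma d]; linarith
  · have := hx.2; rw [← half_lemma (d+1)]; linarith

lemma W_zero (ω : Om) : W ω 0 = 0 := by simp [W]

lemma W_succ (ω : Om) (m : ℕ) : W ω (m+1) = W ω m + (if ω m then 1 else -1) :=
  Finset.sum_range_succ _ _

lemma Ttilde_eval (ω : Om) (m : ℕ) (y : ℝ) :
    Ttilde (fun i => ω (i + m), y) = (fun i => ω (i + (m+1)), sel (ω m) y) := by
  unfold Ttilde
  refine Prod.ext ?_ ?_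
  · funext i; show ω (i + 1 + m) = ω (i + (m+1)); congr 1; omega
  · show sel (ω (0 + m)) y = sel (ω m) y; rw [Nat.zero_add]

/-- Trajectory lemma on the minus side. -/
lemma traj_minus (ω : Om) (x : ℝ) (k : ℕ) (hx : x ∈ Im k) :
    ∀ m : ℕ, (∀ j < m, 1 ≤ (k:ℤ) + W ω j) →
      Ttilde^[m] (ω, x) = (fun i => ω (i + m), (2:ℝ)^(-(W ω m)) * x) ∧
      0 ≤ (k:ℤ) + W ω m ∧ (2:ℝ)^(-(W ω m)) * x ∈ Im ((k:ℤ) + W ω m).toNat := by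
  intro m
  induction m with
  | zero =>
    intro _
    have h0 : W ω 0 = 0 := W_zero ω
    refine ⟨by simp [h0], by simp [h0], by simpa [h0] using hx⟩
  | succ m ih =>
    intro h
    obtain ⟨hit, hnn, hmem⟩ := ih (fun j hj => h j (by omega))
    have hdep : 1 ≤ (k:ℤ) + W ω m := h m (by omega)
    cases hωm : ω m with
    | true =>
      have hW : W ω (m+1) = W ω m + 1 := by rw [W_succ, hωm]; norm_num
      obtain ⟨d', hd'⟩ : ∃ d', ((k:ℤ) + W ω m).toNat = d' := ⟨_, rfl⟩
      rw [hd'] at hmem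
      have h1 := Im_tau1 hmem
      have hz : (2:ℝ)^(-(W ω (m+1))) * x = ((2:ℝ)^(-(W ω m)) * x)/2 := by
        rw [hW, neg_add, zpow_add₀ (two_ne_zero), zpow_neg_one]; ring
      refine ⟨?_, by omega, ?_⟩
      · rw [Function.iterate_succ_apply', hit, Ttilde_eval, hωm, hz]
        exact congrArg (Prod.mk _) h1.1
      · rw [hz, show ((k:ℤ) + W ω (m+1)).toNat = d' + 1 by omega]
        exact h1.2
    | false =>
      have hW : W ω (m+1) = W ω m - 1 := by rw [W_succ, hωm]; simp [sub_eq_add_neg]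
      obtain ⟨d', hd'⟩ : ∃ d', ((k:ℤ) + W ω m).toNat = d' + 1 :=
        ⟨(((k:ℤ) + W ω m).toNat - 1), by omega⟩
      rw [hd'] at hmem
      have h1 := Im_tau2 hmem
      have hz : (2:ℝ)^(-(W ω (m+1))) * x = 2 * ((2:ℝ)^(-(W ω m)) * x) := by
        rw [hW, neg_sub, zpow_sub₀ (two_ne_zero : (2:ℝ) ≠ 0), zpow_one, zpow_neg]; ring
      refine ⟨?_, by omega, ?_⟩
      · rw [Function.iterate_succ_apply', hit, Ttilde_eval, hωm, hz]
        exact congrArg (Prod.mk _) h1.1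
      · rw [hz, show ((k:ℤ) + W ω (m+1)).toNat = d' by omega]
        exact h1.2

/-- Trajectory lemma on the plus side. -/
lemma traj_plus (ω : Om) (x : ℝ) (k : ℕ) (hx : x ∈ Ip k) :
    ∀ m : ℕ, (∀ j < m, 1 ≤ (k:ℤ) - W ω j) →
      Ttilde^[m] (ω, x) = (fun i => ω (i + m), 1 - (2:ℝ)^(W ω m) * (1 - x)) ∧
      0 ≤ (k:ℤ) - W ω m ∧ 1 - (2:ℝ)^(W ω m) * (1 - x) ∈ Ip ((k:ℤ) - W ω m).toNat := by
  intro m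
  induction m with
  | zero =>
    intro _
    have h0 : W ω 0 = 0 := W_zero ω
    refine ⟨by simp [h0], by simp [h0], by simpa [h0] using hx⟩
  | succ m ih =>
    intro h
    obtain ⟨hit, hnn, hmem⟩ := ih (fun j hj => h j (by omega))
    have hdep : 1 ≤ (k:ℤ) - W ω m := h m (by omega)
    cases hωm : ω m with
    | true =>
      have hW : W ω (m+1) = W ω m + 1 := by rw [W_succ, hωm]; norm_num
      obtain ⟨d', hd'⟩ : ∃ d', ((k:ℤ) - W ω m).toNat = d' + 1 :=
        ⟨(((k:ℤ) - W ω m).toNat - 1), by omega⟩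
      rw [hd'] at hmem
      have h1 := Ip_tau1 hmem
      have hz : 1 - (2:ℝ)^(W ω (m+1)) * (1 - x) = 2 * (1 - (2:ℝ)^(W ω m) * (1-x)) - 1 := by
        rw [hW, zpow_add₀ (two_ne_zero), zpow_one]; ring
      refine ⟨?_, by omega, ?_⟩
      · rw [Function.iterate_succ_apply', hit, Ttilde_eval, hωm, hz]
        exact congrArg (Prod.mk _) h1.1
      · rw [hz, show ((k:ℤ) - W ω (m+1)).toNat = d' by omega]
        exact h1.2
    | false =>
      have hW : W ω (m+1) = W ω m - 1 := by rw [W_succ, hωm]; simp [sub_eq_add_neg]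
      have h1 := Ip_tau2 hmem
      have hz : 1 - (2:ℝ)^(W ω (m+1)) * (1 - x) = ((1 - (2:ℝ)^(W ω m) * (1-x)) + 1)/2 := by
        rw [hW, zpow_sub₀ (two_ne_zero : (2:ℝ) ≠ 0), zpow_one]; ring
      refine ⟨?_, by omega, ?_⟩
      · rw [Function.iterate_succ_apply', hit, Ttilde_eval, hωm, hz]
        exact congrArg (Prod.mk _) h1.1
      · rw [hz, show ((k:ℤ) - W ω (m+1)).toNat = ((k:ℤ) - W ω m).toNat + 1 by omega]
        exact h1.2

/-! ### Probability machinery -/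

def cyl (m : ℕ) (g : ℕ → Bool) : Set Om := {ω | ∀ i < m, ω i = g i}

def shiftOm (n : ℕ) : Om → Om := fun ω i => ω (i + n)

lemma measurable_shiftOm (n : ℕ) : Measurable (shiftOm n) :=
  measurable_pi_lambda _ fun i => measurable_pi_apply (i + n)

lemma measurableSet_cyl (m : ℕ) (g : ℕ → Bool) : MeasurableSet (cyl m g) := by
  have : cyl m g = ⋂ i ∈ Finset.range m, (fun ω : Om => ω i) ⁻¹' {g i} := by
    ext ω; simp [cyl, Set.mem_iInter]
  rw [this]
  exact MeasurableSet.biInter (Finset.range m).countable_toSet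
    (fun i _ => measurable_pi_apply i (measurableSet_singleton _))

lemma om_generateFrom :
    (inferInstance : MeasurableSpace Om) =
      MeasurableSpace.generateFrom {S | ∃ m g, S = cyl m g} := by
  apply le_antisymm
  · rw [show (inferInstance : MeasurableSpace Om) = MeasurableSpace.pi from rfl,
      MeasurableSpace.pi]
    refine iSup_le fun i => ?_
    intro S hS
    obtain ⟨t, -, rfl⟩ := hS
    have hsingle : ∀ b : Bool, MeasurableSet[MeasurableSpace.generateFrom
        {S | ∃ m g, S = cyl m g}] {ω : Om | ω i = b} := by
      intro b
      have : {ω : Om | ω i = b} =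
          ⋃ (v : {v : Fin (i+1) → Bool // v ⟨i, Nat.lt_succ_self i⟩ = b}),
            cyl (i+1) (fun j => if h : j < i+1 then v.1 ⟨j, h⟩ else true) := by
        ext ω
        constructor
        · intro hω
          refine Set.mem_iUnion.mpr ⟨⟨fun j => ω j, hω⟩, ?_⟩
          intro j hj
          show ω j = (if h : j < i+1 then ω j else true); rw [dif_pos hj]
        · rintro hω
          obtain ⟨v, hv⟩ := Set.mem_iUnion.mp hω
          have hvi := hv i (Nat.lt_succ_self i)
          show ω i = b
          rw [hvi]
          simpa using v.2
      rw [this]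
      exact MeasurableSet.iUnion fun v =>
        MeasurableSpace.measurableSet_generateFrom ⟨_, _, rfl⟩
    have : (fun ω : Om => ω i) ⁻¹' t = ⋃ b ∈ t, {ω : Om | ω i = b} := by
      ext ω; simp
    rw [this]
    exact MeasurableSet.biUnion t.to_countable (fun b _ => hsingle b)
  · rw [MeasurableSpace.generateFrom_le_iff]
    rintro S ⟨m, g, rfl⟩
    exact measurableSet_cyl m g

lemma cyl_isPiSystem : IsPiSystem {S : Set Om | ∃ m g, S = cyl m g} := by
  rintro S ⟨m, g, rfl⟩ S' ⟨m', g', rfl⟩ hne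
  obtain ⟨ω, hω, hω'⟩ := hne
  rcases le_total m m' with hle | hle
  · have heq : cyl m g ∩ cyl m' g' = cyl m' g' := by
      apply Set.inter_eq_self_of_subset_right
      intro ω' hmem i hi
      have h1 := hmem i (lt_of_lt_of_le hi hle)
      have h2 := hω' i (lt_of_lt_of_le hi hle)
      have h3 := hω i hi
      rw [h1, ← h2, h3]
    rw [heq]; exact ⟨m', g', rfl⟩
  · have heq : cyl m g ∩ cyl m' g' = cyl m g := by
      apply Set.inter_eq_self_of_subset_left
      intro ω' hmem i hi
      have h1 := hmem i (lt_of_lt_of_le hi hle)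
      have h2 := hω i (lt_of_lt_of_le hi hle)
      have h3 := hω' i hi
      rw [h1, ← h2, h3]
    rw [heq]; exact ⟨m, g, rfl⟩

lemma cyl_indep (P : Measure Om) [IsProbabilityMeasure P]
    (hP : ∀ (m : ℕ) (f : ℕ → Bool), P {ω : Om | ∀ i < m, ω i = f i} = (1/2 : ℝ≥0∞)^m)
    (n : ℕ) (g : ℕ → Bool) (A : Set Om) (hA : MeasurableSet A) :
    P (cyl n g ∩ shiftOm n ⁻¹' A) = (1/2:ℝ≥0∞)^n * P A := by
  have hPc : ∀ (m : ℕ) (g' : ℕ → Bool), P (cyl m g') = (1/2:ℝ≥0∞)^m := fun m g' => hP m g'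
  set ν₁ := Measure.map (shiftOm n) (P.restrict (cyl n g)) with hν₁def
  have hν1 : ∀ S : Set Om, MeasurableSet S → ν₁ S = P (cyl n g ∩ shiftOm n ⁻¹' S) := by
    intro S hS
    rw [hν₁def, Measure.map_apply (measurable_shiftOm n) hS,
      Measure.restrict_apply (measurable_shiftOm n hS), Set.inter_comm]
  have key : ν₁ = ((1/2:ℝ≥0∞)^n) • P := by
    haveI : IsFiniteMeasure ν₁ := by
      constructor
      rw [hν1 _ MeasurableSet.univ]
      exact lt_of_le_of_lt (measure_mono (Set.subset_univ _)) (measure_lt_top P _)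
    apply ext_of_generate_finite _ om_generateFrom cyl_isPiSystem
    · rintro S ⟨m, g', rfl⟩
      rw [hν1 _ (measurableSet_cyl m g')]
      have hset : cyl n g ∩ shiftOm n ⁻¹' (cyl m g')
          = cyl (n+m) (fun i => if i < n then g i else g' (i - n)) := by
        ext ω
        constructor
        · rintro ⟨h1, h2⟩ i hi
          by_cases hin : i < n
          · simp only [if_pos hin]; exact h1 i hin
          · have him : i - n < m := by omega
            have h3 : shiftOm n ω (i - n) = g' (i - n) := h2 (i - n) him
            have h4 : shiftOm n ω (i - n) = ω i := by
              show ω (i - n + n) = ω i; congr 1; omega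
            simp only [if_neg hin]
            rw [← h3, h4]
        · intro hmem
          constructor
          · intro i hi
            have := hmem i (by omega)
            simp only [if_pos hi] at this
            exact this
          · intro j hj
            have := hmem (j+n) (by omega)
            simp only [if_neg (show ¬ (j + n < n) by omega)] at this
            show ω (j + n) = g' j
            rw [this]; congr 1; omega
      rw [hset, hPc, Measure.smul_apply, hPc, smul_eq_mul, pow_add]
    · rw [hν1 _ MeasurableSet.univ, Set.preimage_univ, Set.inter_univ, hPc]
      simp [Measure.smul_apply]
  rw [← hν1 A hA, key, Measure.smul_apply, smul_eq_mul]

def extendF (n : ℕ) (v : Fin n → Bool) : ℕ → Bool := fun i => if h : i < n then v ⟨i,h⟩ else true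

lemma cylF_disjoint {n : ℕ} {v v' : Fin n → Bool} (hvv : v ≠ v') :
    Disjoint (cyl n (extendF n v)) (cyl n (extendF n v')) := by
  refine Set.disjoint_left.mpr fun ω h1 h2 => hvv (funext fun j => ?_)
  have a1 := h1 j.1 j.2
  have a2 := h2 j.1 j.2
  rw [extendF] at a1 a2
  simp only [dif_pos j.2] at a1 a2
  simpa using a1.symm.trans a2

def EOm (n : ℕ) (s : Finset (Fin n → Bool)) : Set Om := ⋃ v ∈ s, cyl n (extendF n v)

lemma measurableSet_EOm (n : ℕ) (s : Finset (Fin n → Bool)) : MeasurableSet (EOm n s) :=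
  MeasurableSet.biUnion s.countable_toSet (fun v _ => measurableSet_cyl n (extendF n v))

lemma EOm_inter_measure (P : Measure Om) [IsProbabilityMeasure P]
    (hP : ∀ (m : ℕ) (f : ℕ → Bool), P {ω : Om | ∀ i < m, ω i = f i} = (1/2 : ℝ≥0∞)^m)
    (n : ℕ) (s : Finset (Fin n → Bool)) (A : Set Om) (hA : MeasurableSet A) :
    P (EOm n s ∩ shiftOm n ⁻¹' A) = s.card * ((1/2:ℝ≥0∞)^n * P A) := by
  have hdist : EOm n s ∩ shiftOm n ⁻¹' A
      = ⋃ v ∈ s, (cyl n (extendF n v) ∩ shiftOm n ⁻¹' A) := by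
    rw [EOm, Set.iUnion_inter]
    simp [Set.iUnion_inter]
  rw [hdist, measure_biUnion_finset ?_ ?_]
  · rw [Finset.sum_congr rfl (fun v _ => cyl_indep P hP n (extendF n v) A hA),
      Finset.sum_const, nsmul_eq_mul]
  · exact fun v _ v' _ hvv =>
      (cylF_disjoint hvv).mono Set.inter_subset_left Set.inter_subset_left
  · exact fun v _ => (measurableSet_cyl _ _).inter (measurable_shiftOm n hA)

lemma W_eq_of_cyl {n : ℕ} {g : ℕ → Bool} {ω : Om} (hω : ω ∈ cyl n g) {m : ℕ} (hm : m ≤ n) :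
    W ω m = W g m :=
  Finset.sum_congr rfl fun i hi => by
    rw [hω i (by have := Finset.mem_range.mp hi; omega)]

def hitSet (k n : ℕ) : Finset (Fin n → Bool) :=
  @Finset.filter _ (fun v => extendF n v ∈ hitW k n) (Classical.decPred _) Finset.univ

lemma mem_hitSet {k n : ℕ} (v : Fin n → Bool) : v ∈ hitSet k n ↔ extendF n v ∈ hitW k n :=
  (@Finset.mem_filter _ _ (Classical.decPred _) _ _).trans (and_iff_right (Finset.mem_univ v))

lemma hitW_eq_EOm (k n : ℕ) : hitW k n = EOm n (hitSet k n) := by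
  classical
  ext ω
  constructor
  · intro hω
    have hcyl : ω ∈ cyl n (extendF n (fun i : Fin n => ω i.1)) := by
      intro i hi
      rw [extendF]; simp [dif_pos hi]
    refine Set.mem_iUnion₂.mpr ⟨_, (mem_hitSet _).mpr ?_, hcyl⟩
    refine ⟨?_, ?_⟩
    · rw [← W_eq_of_cyl hcyl le_rfl]; exact hω.1
    · intro m h1m hmn
      rw [← W_eq_of_cyl hcyl (le_of_lt hmn)]
      exact hω.2 m h1m hmn
  · intro hω
    obtain ⟨v, hv, hcyl⟩ := Set.mem_iUnion₂.mp hω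
    have hv' := (mem_hitSet v).mp hv
    refine ⟨?_, ?_⟩
    · rw [W_eq_of_cyl hcyl le_rfl]; exact hv'.1
    · intro m h1m hmn
      rw [W_eq_of_cyl hcyl (le_of_lt hmn)]
      exact hv'.2 m h1m hmn

lemma measurableSet_hitW (k n : ℕ) : MeasurableSet (hitW k n) := by
  rw [hitW_eq_EOm]; exact measurableSet_EOm _ _

lemma hitW_measure (P : Measure Om) [IsProbabilityMeasure P]
    (hP : ∀ (m : ℕ) (f : ℕ → Bool), P {ω : Om | ∀ i < m, ω i = f i} = (1/2 : ℝ≥0∞)^m)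
    (k n : ℕ) : P (hitW k n) = (hitSet k n).card * (1/2:ℝ≥0∞)^n := by
  have := EOm_inter_measure P hP n (hitSet k n) Set.univ MeasurableSet.univ
  rw [Set.preimage_univ, Set.inter_univ, measure_univ, mul_one] at this
  rw [hitW_eq_EOm]; exact this

lemma hitW_indep (P : Measure Om) [IsProbabilityMeasure P]
    (hP : ∀ (m : ℕ) (f : ℕ → Bool), P {ω : Om | ∀ i < m, ω i = f i} = (1/2 : ℝ≥0∞)^m)
    (k n : ℕ) (A : Set Om) (hA : MeasurableSet A) :
    P (hitW k n ∩ shiftOm n ⁻¹' A) = P (hitW k n) * P A := by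
  rw [hitW_eq_EOm, EOm_inter_measure P hP n _ A hA, ← hitW_eq_EOm, hitW_measure P hP k n]
  ring

/-- The mirror event: first hitting of `+k` at time `n`. -/
def hitP (k n : ℕ) : Set Om :=
  {ω : Om | W ω n = (k:ℤ) ∧ ∀ m : ℕ, 1 ≤ m → m < n → W ω m ≠ (k:ℤ)}

def hitPSet (k n : ℕ) : Finset (Fin n → Bool) :=
  @Finset.filter _ (fun v => extendF n v ∈ hitP k n) (Classical.decPred _) Finset.univ

lemma mem_hitPSet {k n : ℕ} (v : Fin n → Bool) : v ∈ hitPSet k n ↔ extendF n v ∈ hitP k n :=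
  (@Finset.mem_filter _ _ (Classical.decPred _) _ _).trans (and_iff_right (Finset.mem_univ v))

lemma hitP_eq_EOm (k n : ℕ) : hitP k n = EOm n (hitPSet k n) := by
  classical
  ext ω
  constructor
  · intro hω
    have hcyl : ω ∈ cyl n (extendF n (fun i : Fin n => ω i.1)) := by
      intro i hi
      rw [extendF]; simp [dif_pos hi]
    refine Set.mem_iUnion₂.mpr ⟨_, (mem_hitPSet _).mpr ?_, hcyl⟩
    refine ⟨?_, ?_⟩
    · rw [← W_eq_of_cyl hcyl le_rfl]; exact hω.1
    · intro m h1m hmn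
      rw [← W_eq_of_cyl hcyl (le_of_lt hmn)]
      exact hω.2 m h1m hmn
  · intro hω
    obtain ⟨v, hv, hcyl⟩ := Set.mem_iUnion₂.mp hω
    have hv' := (mem_hitPSet v).mp hv
    refine ⟨?_, ?_⟩
    · rw [W_eq_of_cyl hcyl le_rfl]; exact hv'.1
    · intro m h1m hmn
      rw [W_eq_of_cyl hcyl (le_of_lt hmn)]
      exact hv'.2 m h1m hmn

lemma measurableSet_hitP (k n : ℕ) : MeasurableSet (hitP k n) := by
  rw [hitP_eq_EOm]; exact measurableSet_EOm _ _

lemma W_extendF_neg {n : ℕ} (v : Fin n → Bool) {m : ℕ} (hm : m ≤ n) :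
    W (extendF n (fun j => !(v j))) m = - W (extendF n v) m := by
  rw [W, W, ← Finset.sum_neg_distrib]
  refine Finset.sum_congr rfl fun i hi => ?_
  have hin : i < n := by have := Finset.mem_range.mp hi; omega
  rw [extendF, extendF]
  simp only [dif_pos hin]
  cases v ⟨i, hin⟩ <;> simp

lemma hitPSet_card (k n : ℕ) : (hitPSet k n).card = (hitSet k n).card := by
  classical
  apply Finset.card_bij' (fun v _ => fun j => !(v j)) (fun v _ => fun j => !(v j))
  · intro v hv
    have hv' := (mem_hitPSet v).mp hv
    refine (mem_hitSet _).mpr ⟨?_, ?_⟩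
    · rw [W_extendF_neg v le_rfl, hv'.1]
    · intro m h1m hmn hcon
      rw [W_extendF_neg v (le_of_lt hmn)] at hcon
      exact hv'.2 m h1m hmn (by omega)
  · intro v hv
    have hv' := (mem_hitSet v).mp hv
    refine (mem_hitPSet _).mpr ⟨?_, ?_⟩
    · rw [W_extendF_neg v le_rfl, hv'.1]; ring
    · intro m h1m hmn hcon
      rw [W_extendF_neg v (le_of_lt hmn)] at hcon
      exact hv'.2 m h1m hmn (by omega)
  · intro v _; funext j; simp
  · intro v _; funext j; simp

lemma hitP_indep (P : Measure Om) [IsProbabilityMeasure P]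
    (hP : ∀ (m : ℕ) (f : ℕ → Bool), P {ω : Om | ∀ i < m, ω i = f i} = (1/2 : ℝ≥0∞)^m)
    (k n : ℕ) (A : Set Om) (hA : MeasurableSet A) :
    P (hitP k n ∩ shiftOm n ⁻¹' A) = P (hitW k n) * P A := by
  rw [hitP_eq_EOm, EOm_inter_measure P hP n _ A hA, hitPSet_card,
    hitW_measure P hP k n]
  ring

/-! ### Geometry of the intervals vs `J`, `Rm`, `Rp` -/

lemma Im_zero_subset_J : Im 0 ⊆ J := by
  intro x hx
  obtain ⟨h1, h2⟩ := hx
  norm_num at h1 h2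
  exact ⟨by linarith, by linarith⟩

lemma Ip_zero_subset_J : Ip 0 ⊆ J := by
  intro x hx
  obtain ⟨h1, h2⟩ := hx
  norm_num at h1 h2
  exact ⟨by linarith, by linarith⟩

lemma Im_succ_subset_Rm (d : ℕ) : Im (d+1) ⊆ Rm := by
  intro x hx
  obtain ⟨h1, h2⟩ := hx
  have h3 : (1:ℝ)/2^(d+1+1) ≤ 1/2^2 := two_pow_anti (by omega)
  have h4 : (1:ℝ)/2^2 = 1/4 := by norm_num
  rw [h4] at h3
  exact ⟨lt_trans (by positivity) h1, by linarith⟩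

lemma Ip_succ_subset_Rp (d : ℕ) : Ip (d+1) ⊆ Rp := by
  intro x hx
  obtain ⟨h1, h2⟩ := hx
  have h3 : (1:ℝ)/2^(d+1+1) ≤ 1/2^2 := two_pow_anti (by omega)
  have h4 : (1:ℝ)/2^2 = 1/4 := by norm_num
  rw [h4] at h3
  have h5 : (0:ℝ) < 1/2^(d+1+2) := by positivity
  exact ⟨by linarith, by linarith⟩

lemma Im_succ_notin_J {d : ℕ} {x : ℝ} (hx : x ∈ Im (d+1)) : x ∉ J :=
  fun hJ => absurd ((Im_succ_subset_Rm d hx).2) (not_lt.mpr (le_of_lt hJ.1))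

lemma Ip_succ_notin_J {d : ℕ} {x : ℝ} (hx : x ∈ Ip (d+1)) : x ∉ J :=
  fun hJ => absurd ((Ip_succ_subset_Rp d hx).1) (not_lt.mpr (le_of_lt hJ.2))

lemma mem_Jt_iff {q : Om × ℝ} : q ∈ Jt ↔ q.2 ∈ J := by
  simp [Jt, Set.mem_prod]

/-! ### Characterization of `Jn n` on the rays -/

lemma char_minus {n : ℕ} (hn : 1 ≤ n) {A : Set Om} {B : Set ℝ} {k : ℕ} {ω : Om} {x : ℝ}
    (hx : x ∈ Im (k+1)) :
    ((ω,x) ∈ Jn n ∧ Ttilde^[n] (ω,x) ∈ A ×ˢ B) ↔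
      (ω ∈ hitW (k+1) n ∧ shiftOm n ω ∈ A ∧ (2:ℝ)^(k+1) * x ∈ B) := by
  have hzpow : ∀ w : ℤ, w = -((k:ℤ)+1) → (2:ℝ)^(-w) * x = 2^(k+1) * x := by
    intro w hw
    rw [hw, neg_neg, show ((k:ℤ)+1) = ((k+1 : ℕ) : ℤ) by push_cast; ring, zpow_natCast]
  constructor
  · rintro ⟨⟨hnotJ, hhit, hbet⟩, hAB⟩
    have key : ∀ m, m < n → 1 ≤ ((k:ℤ)+1) + W ω m := by
      intro m
      induction m using Nat.strong_induction_on with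
      | _ m ih =>
        intro hmn
        rcases Nat.eq_zero_or_pos m with rfl | hm1
        · rw [W_zero]; omega
        · have htraj := traj_minus ω x (k+1) hx m (fun j hj => by
            have := ih j hj (lt_trans hj hmn)
            push_cast; push_cast at this; omega)
          have hnotJt := hbet m hm1 hmn
          rw [htraj.1, mem_Jt_iff] at hnotJt
          have hnn := htraj.2.1
          by_contra hcon
          have h0 : (((k+1:ℕ):ℤ) + W ω m).toNat = 0 := by push_cast; push_cast at hcon hnn; omega
          rw [h0] at htraj
          exact hnotJt (Im_zero_subset_J htraj.2.2)
    have htraj := traj_minus ω x (k+1) hx n (fun j hj => by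
      have := key j hj; push_cast; push_cast at this; omega)
    have hhit' := hhit
    rw [htraj.1, mem_Jt_iff] at hhit'
    have hWn : W ω n = -((k:ℤ)+1) := by
      have hnn := htraj.2.1
      by_contra hcon
      have hpos : 1 ≤ (((k+1:ℕ):ℤ) + W ω n) := by push_cast; push_cast at hcon hnn; omega
      obtain ⟨d, hd⟩ : ∃ d, (((k+1:ℕ):ℤ) + W ω n).toNat = d + 1 :=
        ⟨(((k+1:ℕ):ℤ) + W ω n).toNat - 1, by omega⟩
      rw [hd] at htraj
      exact Im_succ_notin_J htraj.2.2 hhit'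
    have hωhit : ω ∈ hitW (k+1) n := by
      refine ⟨by push_cast; push_cast at hWn; omega, fun m h1m hmn => ?_⟩
      have := key m hmn
      push_cast; push_cast at this; omega
    rw [htraj.1] at hAB
    refine ⟨hωhit, hAB.1, ?_⟩
    have := hAB.2
    rwa [hzpow _ hWn] at this
  · rintro ⟨⟨hWn, hfirst⟩, hA, hB⟩
    have hWn' : W ω n = -((k:ℤ)+1) := by push_cast at hWn; omega
    have key : ∀ m, m < n → 1 ≤ ((k:ℤ)+1) + W ω m := by
      intro m
      induction m with
      | zero => intro _; rw [W_zero]; omega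
      | succ m ih =>
        intro hmn
        have h1 := ih (by omega)
        have hstep : W ω (m+1) = W ω m + 1 ∨ W ω (m+1) = W ω m - 1 := by
          rw [W_succ]
          cases ω m <;> simp [sub_eq_add_neg]
        have hne : W ω (m+1) ≠ -((k:ℤ)+1) := by
          have := hfirst (m+1) (by omega) hmn
          push_cast at this; omega
        omega
    have key' : ∀ j, j < n → 1 ≤ ((k+1:ℕ):ℤ) + W ω j := by
      intro j hj; have := key j hj; push_cast; omega
    have htraj := traj_minus ω x (k+1) hx n key'
    refine ⟨⟨?_, ?_, ?_⟩, ?_⟩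
    · rw [mem_Jt_iff]; exact Im_succ_notin_J hx
    · rw [htraj.1, mem_Jt_iff]
      have h0 : (((k+1:ℕ):ℤ) + W ω n).toNat = 0 := by push_cast; omega
      rw [h0] at htraj
      exact Im_zero_subset_J htraj.2.2
    · intro m h1m hmn
      have htrajm := traj_minus ω x (k+1) hx m (fun j hj => key' j (lt_trans hj hmn))
      rw [htrajm.1, mem_Jt_iff]
      obtain ⟨d, hd⟩ : ∃ d, (((k+1:ℕ):ℤ) + W ω m).toNat = d + 1 := by
        have := key m hmn; push_cast at this
        exact ⟨(((k+1:ℕ):ℤ) + W ω m).toNat - 1, by push_cast; omega⟩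
      rw [hd] at htrajm
      exact Im_succ_notin_J htrajm.2.2
    · rw [htraj.1]
      exact ⟨hA, by rw [hzpow _ hWn']; exact hB⟩

lemma char_plus {n : ℕ} (hn : 1 ≤ n) {A : Set Om} {B : Set ℝ} {k : ℕ} {ω : Om} {x : ℝ}
    (hx : x ∈ Ip (k+1)) :
    ((ω,x) ∈ Jn n ∧ Ttilde^[n] (ω,x) ∈ A ×ˢ B) ↔
      (ω ∈ hitP (k+1) n ∧ shiftOm n ω ∈ A ∧ 1 - (2:ℝ)^(k+1) * (1-x) ∈ B) := by
  have hzpow : ∀ w : ℤ, w = ((k:ℤ)+1) → 1 - (2:ℝ)^w * (1-x) = 1 - 2^(k+1) * (1-x) := by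
    intro w hw
    rw [hw, show ((k:ℤ)+1) = ((k+1 : ℕ) : ℤ) by push_cast; ring, zpow_natCast]
  constructor
  · rintro ⟨⟨hnotJ, hhit, hbet⟩, hAB⟩
    have key : ∀ m, m < n → 1 ≤ ((k:ℤ)+1) - W ω m := by
      intro m
      induction m using Nat.strong_induction_on with
      | _ m ih =>
        intro hmn
        rcases Nat.eq_zero_or_pos m with rfl | hm1
        · rw [W_zero]; omega
        · have htraj := traj_plus ω x (k+1) hx m (fun j hj => by
            have := ih j hj (lt_trans hj hmn)
            push_cast; push_cast at this; omega)
          have hnotJt := hbet m hm1 hmn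
          rw [htraj.1, mem_Jt_iff] at hnotJt
          have hnn := htraj.2.1
          by_contra hcon
          have h0 : (((k+1:ℕ):ℤ) - W ω m).toNat = 0 := by push_cast; push_cast at hcon hnn; omega
          rw [h0] at htraj
          exact hnotJt (Ip_zero_subset_J htraj.2.2)
    have htraj := traj_plus ω x (k+1) hx n (fun j hj => by
      have := key j hj; push_cast; push_cast at this; omega)
    have hhit' := hhit
    rw [htraj.1, mem_Jt_iff] at hhit'
    have hWn : W ω n = ((k:ℤ)+1) := by
      have hnn := htraj.2.1
      by_contra hcon
      have hpos : 1 ≤ (((k+1:ℕ):ℤ) - W ω n) := by push_cast; push_cast at hcon hnn; omega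
      obtain ⟨d, hd⟩ : ∃ d, (((k+1:ℕ):ℤ) - W ω n).toNat = d + 1 :=
        ⟨(((k+1:ℕ):ℤ) - W ω n).toNat - 1, by omega⟩
      rw [hd] at htraj
      exact Ip_succ_notin_J htraj.2.2 hhit'
    have hωhit : ω ∈ hitP (k+1) n := by
      refine ⟨by push_cast; push_cast at hWn; omega, fun m h1m hmn => ?_⟩
      have := key m hmn
      push_cast; push_cast at this; omega
    rw [htraj.1] at hAB
    refine ⟨hωhit, hAB.1, ?_⟩
    have := hAB.2
    rwa [hzpow _ hWn] at this
  · rintro ⟨⟨hWn, hfirst⟩, hA, hB⟩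
    have hWn' : W ω n = ((k:ℤ)+1) := by push_cast at hWn; omega
    have key : ∀ m, m < n → 1 ≤ ((k:ℤ)+1) - W ω m := by
      intro m
      induction m with
      | zero => intro _; rw [W_zero]; omega
      | succ m ih =>
        intro hmn
        have h1 := ih (by omega)
        have hstep : W ω (m+1) = W ω m + 1 ∨ W ω (m+1) = W ω m - 1 := by
          rw [W_succ]
          cases ω m <;> simp [sub_eq_add_neg]
        have hne : W ω (m+1) ≠ ((k:ℤ)+1) := by
          have := hfirst (m+1) (by omega) hmn
          push_cast at this; omega
        omega
    have key' : ∀ j, j < n → 1 ≤ ((k+1:ℕ):ℤ) - W ω j := by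
      intro j hj; have := key j hj; push_cast; omega
    have htraj := traj_plus ω x (k+1) hx n key'
    refine ⟨⟨?_, ?_, ?_⟩, ?_⟩
    · rw [mem_Jt_iff]; exact Ip_succ_notin_J hx
    · rw [htraj.1, mem_Jt_iff]
      have h0 : (((k+1:ℕ):ℤ) - W ω n).toNat = 0 := by push_cast; omega
      rw [h0] at htraj
      exact Ip_zero_subset_J htraj.2.2
    · intro m h1m hmn
      have htrajm := traj_plus ω x (k+1) hx m (fun j hj => key' j (lt_trans hj hmn))
      rw [htrajm.1, mem_Jt_iff]
      obtain ⟨d, hd⟩ : ∃ d, (((k+1:ℕ):ℤ) - W ω m).toNat = d + 1 := by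
        have := key m hmn; push_cast at this
        exact ⟨(((k+1:ℕ):ℤ) - W ω m).toNat - 1, by push_cast; omega⟩
      rw [hd] at htrajm
      exact Ip_succ_notin_J htrajm.2.2
    · rw [htraj.1]
      exact ⟨hA, by rw [hzpow _ hWn']; exact hB⟩

/-! ### Preimage identities for the scaling maps -/

lemma pow_split (a b : ℕ) : (1:ℝ)/2^(a+b) = (1/2^b)/2^a := by
  rw [pow_add]; ring

lemma scale_preimage_Im (k : ℕ) :
    (fun x : ℝ => (2:ℝ)^(k+1) * x) ⁻¹' (Im 0) = Im (k+1) := by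
  have hp : (0:ℝ) < 2^(k+1) := by positivity
  ext x
  have hiff1 : (1:ℝ)/2^(k+1+2) < x ↔ (1:ℝ)/2^(0+2) < 2^(k+1)*x := by
    rw [show k+1+2 = (k+1)+(0+2) by omega, pow_split (k+1) (0+2), div_lt_iff₀ hp, mul_comm]
  have hiff2 : x < (1:ℝ)/2^(k+1+1) ↔ 2^(k+1)*x < (1:ℝ)/2^(0+1) := by
    rw [show k+1+1 = (k+1)+(0+1) by omega, pow_split (k+1) (0+1), lt_div_iff₀ hp, mul_comm]
  constructor
  · rintro ⟨h1, h2⟩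
    exact ⟨hiff1.mpr h1, hiff2.mpr h2⟩
  · rintro ⟨h1, h2⟩
    exact ⟨hiff1.mp h1, hiff2.mp h2⟩

lemma scale_preimage_Ip (k : ℕ) :
    (fun x : ℝ => 1 - (2:ℝ)^(k+1) * (1-x)) ⁻¹' (Ip 0) = Ip (k+1) := by
  have hp : (0:ℝ) < 2^(k+1) := by positivity
  ext x
  have hiff1 : (1:ℝ) - 1/2^(k+1+1) < x ↔ 1 - (1:ℝ)/2^(0+1) < 1 - 2^(k+1)*(1-x) := by
    have e : (1:ℝ)/2^(k+1+1) = (1/2^(0+1))/2^(k+1) := by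
      rw [show k+1+1 = (k+1)+(0+1) by omega, pow_split (k+1) (0+1)]
    constructor
    · intro h
      have h2 : (1:ℝ) - x < (1/2^(0+1))/2^(k+1) := by rw [← e]; linarith
      have h3 : 2^(k+1)*(1-x) < (1:ℝ)/2^(0+1) := by
        have := (lt_div_iff₀ hp).mp h2; linarith [mul_comm ((2:ℝ)^(k+1)) (1-x)]
      linarith
    · intro h
      have h3 : 2^(k+1)*(1-x) < (1:ℝ)/2^(0+1) := by linarith
      have h2 : (1:ℝ) - x < (1/2^(0+1))/2^(k+1) := by
        rw [lt_div_iff₀ hp]; linarith [mul_comm ((2:ℝ)^(k+1)) (1-x)]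
      rw [← e] at h2; linarith
  have hiff2 : x < (1:ℝ) - 1/2^(k+1+2) ↔ 1 - 2^(k+1)*(1-x) < 1 - (1:ℝ)/2^(0+2) := by
    have e : (1:ℝ)/2^(k+1+2) = (1/2^(0+2))/2^(k+1) := by
      rw [show k+1+2 = (k+1)+(0+2) by omega, pow_split (k+1) (0+2)]
    constructor
    · intro h
      have h2 : (1/2^(0+2))/2^(k+1) < (1:ℝ) - x := by rw [← e]; linarith
      have h3 : (1:ℝ)/2^(0+2) < 2^(k+1)*(1-x) := by
        have := (div_lt_iff₀ hp).mp h2; linarith [mul_comm ((2:ℝ)^(k+1)) (1-x)]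
      linarith
    · intro h
      have h3 : (1:ℝ)/2^(0+2) < 2^(k+1)*(1-x) := by linarith
      have h2 : (1/2^(0+2))/2^(k+1) < (1:ℝ) - x := by
        rw [div_lt_iff₀ hp]; linarith [mul_comm ((2:ℝ)^(k+1)) (1-x)]
      rw [← e] at h2; linarith
  constructor
  · rintro ⟨h1, h2⟩
    exact ⟨hiff1.mpr h1, hiff2.mpr h2⟩
  · rintro ⟨h1, h2⟩
    exact ⟨hiff1.mp h1, hiff2.mp h2⟩

lemma ofReal_inv_pow (k : ℕ) :
    ENNReal.ofReal (((2:ℝ)^(k+1))⁻¹) = ((2:ℝ≥0∞)^(k+1))⁻¹ := by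
  rw [ENNReal.ofReal_inv_of_pos (by positivity), ENNReal.ofReal_pow (by norm_num : (0:ℝ) ≤ 2)]
  norm_num

lemma volume_scale_preimage (k : ℕ) (s : Set ℝ) :
    volume ((fun x : ℝ => (2:ℝ)^(k+1) * x) ⁻¹' s) = ((2:ℝ≥0∞)^(k+1))⁻¹ * volume s := by
  rw [Real.volume_preimage_mul_left (by positivity : ((2:ℝ)^(k+1)) ≠ 0) s,
    abs_of_pos (by positivity : (0:ℝ) < ((2:ℝ)^(k+1))⁻¹), ofReal_inv_pow]

lemma volume_plusmap_preimage (k : ℕ) (s : Set ℝ) :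
    volume ((fun x : ℝ => 1 - (2:ℝ)^(k+1) * (1-x)) ⁻¹' s)
      = ((2:ℝ≥0∞)^(k+1))⁻¹ * volume s := by
  have hfun : (fun x : ℝ => 1 - (2:ℝ)^(k+1) * (1-x))
      = (fun y : ℝ => (1 - (2:ℝ)^(k+1)) + y) ∘ (fun x : ℝ => (2:ℝ)^(k+1) * x) := by
    funext x; simp [Function.comp]; ring
  rw [hfun, Set.preimage_comp, volume_scale_preimage, measure_preimage_add]

/-! ### The leftover dyadic points are countable -/

lemma gap_minus (x : ℝ) (hx0 : 0 < x) (hx4 : x < 1/4)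
    (hnot : ∀ k : ℕ, x ∉ Im (k+1)) : ∃ k : ℕ, x = 1/2^(k+3) := by
  classical
  have hex : ∃ m : ℕ, (1:ℝ)/2^m ≤ x := by
    obtain ⟨m, hm⟩ := pow_unbounded_of_one_lt (1/x) (by norm_num : (1:ℝ) < 2)
    refine ⟨m, ?_⟩
    have h1 : 1 < 2^m * x := by
      have := (div_lt_iff₀ hx0).mp hm
      linarith [mul_comm x ((2:ℝ)^m)]
    rw [div_le_iff₀ (by positivity : (0:ℝ) < 2^m)]
    linarith [mul_comm x ((2:ℝ)^m)]
  obtain ⟨m, hm, hmin⟩ : ∃ m : ℕ, ((1:ℝ)/2^m ≤ x) ∧ ∀ j, (1:ℝ)/2^j ≤ x → m ≤ j :=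
    ⟨Nat.find hex, Nat.find_spec hex, fun j hj => Nat.find_min' hex hj⟩
  have hm3 : 3 ≤ m := by
    by_contra hcon
    have hle : (1:ℝ)/2^2 ≤ 1/2^m := two_pow_anti (by omega)
    have : (1:ℝ)/2^2 = 1/4 := by norm_num
    linarith
  have hprev : ¬ ((1:ℝ)/2^(m-1) ≤ x) := fun h => by have := hmin (m-1) h; omega
  push_neg at hprev
  refine ⟨m - 3, ?_⟩
  rcases eq_or_lt_of_le hm with heq | hlt
  · rw [show m - 3 + 3 = m by omega]; exact heq.symm
  · exfalso
    apply hnot (m - 3)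
    constructor
    · rw [show m - 3 + 1 + 2 = m by omega]; exact hlt
    · rw [show m - 3 + 1 + 1 = m - 1 by omega]; exact hprev

lemma Rm_leftover_countable : (Rm \ ⋃ k, Im (k+1)).Countable := by
  refine Set.Countable.mono ?_ (Set.countable_range fun k : ℕ => (1:ℝ)/2^(k+3))
  rintro x ⟨⟨hx0, hx4⟩, hnx⟩
  obtain ⟨k, hk⟩ := gap_minus x hx0 hx4 (fun k hk => hnx (Set.mem_iUnion.mpr ⟨k, hk⟩))
  exact ⟨k, hk.symm⟩

lemma gap_plus (x : ℝ) (hx0 : 3/4 < x) (hx1 : x < 1)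
    (hnot : ∀ k : ℕ, x ∉ Ip (k+1)) : ∃ k : ℕ, x = 1 - 1/2^(k+3) := by
  have hnot' : ∀ k : ℕ, (1 - x) ∉ Im (k+1) := by
    intro k hk
    apply hnot k
    exact ⟨by have := hk.2; linarith, by have := hk.1; linarith⟩
  obtain ⟨k, hk⟩ := gap_minus (1-x) (by linarith) (by linarith) hnot'
  exact ⟨k, by linarith⟩

lemma Rp_leftover_countable : (Rp \ ⋃ k, Ip (k+1)).Countable := by
  refine Set.Countable.mono ?_ (Set.countable_range fun k : ℕ => 1 - (1:ℝ)/2^(k+3))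
  rintro x ⟨⟨hx0, hx4⟩, hnx⟩
  obtain ⟨k, hk⟩ := gap_plus x hx0 hx4 (fun k hk => hnx (Set.mem_iUnion.mpr ⟨k, hk⟩))
  exact ⟨k, hk.symm⟩

instance : SFinite muH := by unfold muH; infer_instance

/-! ### The good sets `Um`, `Up` -/

def Um (n : ℕ) (A : Set Om) (B : Set ℝ) : Set (Om × ℝ) :=
  ⋃ k : ℕ, (hitW (k+1) n ∩ shiftOm n ⁻¹' A) ×ˢ
    (Im (k+1) ∩ (fun x : ℝ => (2:ℝ)^(k+1) * x) ⁻¹' B)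

def Up (n : ℕ) (A : Set Om) (B : Set ℝ) : Set (Om × ℝ) :=
  ⋃ k : ℕ, (hitP (k+1) n ∩ shiftOm n ⁻¹' A) ×ˢ
    (Ip (k+1) ∩ (fun x : ℝ => 1 - (2:ℝ)^(k+1) * (1-x)) ⁻¹' B)

lemma Um_subset (n : ℕ) (A : Set Om) (B : Set ℝ) : Um n A B ⊆ Set.univ ×ˢ Rm := by
  rintro ⟨ω, x⟩ hq
  obtain ⟨k, hk⟩ := Set.mem_iUnion.mp hq
  exact ⟨Set.mem_univ _, Im_succ_subset_Rm k hk.2.1⟩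

lemma Up_subset (n : ℕ) (A : Set Om) (B : Set ℝ) : Up n A B ⊆ Set.univ ×ˢ Rp := by
  rintro ⟨ω, x⟩ hq
  obtain ⟨k, hk⟩ := Set.mem_iUnion.mp hq
  exact ⟨Set.mem_univ _, Ip_succ_subset_Rp k hk.2.1⟩

lemma minus_ae (P : Measure Om) [IsProbabilityMeasure P] {n : ℕ} (hn : 1 ≤ n)
    (A : Set Om) (B : Set ℝ) :
    (Jn n ∩ (Set.univ ×ˢ Rm) ∩ Ttilde^[n] ⁻¹' (A ×ˢ B) : Set (Om × ℝ)) =ᵐ[P.prod muH] Um n A B := by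
  set S := Jn n ∩ (Set.univ ×ˢ Rm) ∩ Ttilde^[n] ⁻¹' (A ×ˢ B) with hSdef
  have hUS : Um n A B ⊆ S := by
    rintro ⟨ω, x⟩ hq
    obtain ⟨k, hk⟩ := Set.mem_iUnion.mp hq
    obtain ⟨hω, hx⟩ := hk
    have hchar := (char_minus hn (A := A) (B := B) hx.1).mpr ⟨hω.1, hω.2, hx.2⟩
    exact ⟨⟨hchar.1, ⟨Set.mem_univ _, Im_succ_subset_Rm k hx.1⟩⟩, hchar.2⟩
  have hSU : S \ Um n A B ⊆ Set.univ ×ˢ (Rm \ ⋃ k, Im (k+1)) := by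
    rintro ⟨ω, x⟩ ⟨hS, hnU⟩
    refine ⟨Set.mem_univ _, hS.1.2.2, ?_⟩
    intro hxU
    obtain ⟨k, hk⟩ := Set.mem_iUnion.mp hxU
    have hchar := (char_minus hn (A := A) (B := B) hk).mp ⟨hS.1.1, hS.2⟩
    exact hnU (Set.mem_iUnion.mpr ⟨k, ⟨hchar.1, hchar.2.1⟩, ⟨hk, hchar.2.2⟩⟩)
  refine ae_eq_set.mpr ⟨?_, ?_⟩
  · refine measure_mono_null hSU ?_
    rw [Measure.prod_prod, muH_countable_null Rm_leftover_countable, mul_zero]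
  · rw [Set.diff_eq_empty.mpr hUS, measure_empty]

lemma plus_ae (P : Measure Om) [IsProbabilityMeasure P] {n : ℕ} (hn : 1 ≤ n)
    (A : Set Om) (B : Set ℝ) :
    (Jn n ∩ (Set.univ ×ˢ Rp) ∩ Ttilde^[n] ⁻¹' (A ×ˢ B) : Set (Om × ℝ)) =ᵐ[P.prod muH] Up n A B := by
  set S := Jn n ∩ (Set.univ ×ˢ Rp) ∩ Ttilde^[n] ⁻¹' (A ×ˢ B) with hSdef
  have hUS : Up n A B ⊆ S := by
    rintro ⟨ω, x⟩ hq
    obtain ⟨k, hk⟩ := Set.mem_iUnion.mp hq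
    obtain ⟨hω, hx⟩ := hk
    have hchar := (char_plus hn (A := A) (B := B) hx.1).mpr ⟨hω.1, hω.2, hx.2⟩
    exact ⟨⟨hchar.1, ⟨Set.mem_univ _, Ip_succ_subset_Rp k hx.1⟩⟩, hchar.2⟩
  have hSU : S \ Up n A B ⊆ Set.univ ×ˢ (Rp \ ⋃ k, Ip (k+1)) := by
    rintro ⟨ω, x⟩ ⟨hS, hnU⟩
    refine ⟨Set.mem_univ _, hS.1.2.2, ?_⟩
    intro hxU
    obtain ⟨k, hk⟩ := Set.mem_iUnion.mp hxU
    have hchar := (char_plus hn (A := A) (B := B) hk).mp ⟨hS.1.1, hS.2⟩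
    exact hnU (Set.mem_iUnion.mpr ⟨k, ⟨hchar.1, hchar.2.1⟩, ⟨hk, hchar.2.2⟩⟩)
  refine ae_eq_set.mpr ⟨?_, ?_⟩
  · refine measure_mono_null hSU ?_
    rw [Measure.prod_prod, muH_countable_null Rp_leftover_countable, mul_zero]
  · rw [Set.diff_eq_empty.mpr hUS, measure_empty]

/-! ### Measures of `Um`, `Up` -/

lemma minus_term (P : Measure Om) [IsProbabilityMeasure P]
    (hP : ∀ (m : ℕ) (f : ℕ → Bool), P {ω : Om | ∀ i < m, ω i = f i} = (1/2 : ℝ≥0∞)^m)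
    (n k : ℕ) (A : Set Om) (hA : MeasurableSet A) (B : Set ℝ) (hB : MeasurableSet B) :
    (P.prod muH) ((hitW (k+1) n ∩ shiftOm n ⁻¹' A) ×ˢ
        (Im (k+1) ∩ (fun x : ℝ => (2:ℝ)^(k+1) * x) ⁻¹' B))
      = (((2:ℝ≥0∞)^(k+2) - 1) / 2^(k+1) * P (hitW (k+1) n)) * (P A * muH (B ∩ Im 0)) := by
  rw [Measure.prod_prod, hitW_indep P hP (k+1) n A hA]
  have hset : Im (k+1) ∩ (fun x : ℝ => (2:ℝ)^(k+1) * x) ⁻¹' B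
      = (fun x : ℝ => (2:ℝ)^(k+1) * x) ⁻¹' (Im 0 ∩ B) := by
    rw [Set.preimage_inter, scale_preimage_Im]
  rw [hset]
  have hmeas : MeasurableSet ((fun x : ℝ => (2:ℝ)^(k+1) * x) ⁻¹' (Im 0 ∩ B)) :=
    (measurable_id.const_mul ((2:ℝ)^(k+1))) ((measurableSet_Im 0).inter hB)
  have hsub : (fun x : ℝ => (2:ℝ)^(k+1) * x) ⁻¹' (Im 0 ∩ B) ⊆ Im (k+1) := by
    rw [← scale_preimage_Im k]; exact Set.preimage_mono Set.inter_subset_left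
  rw [muH_apply_subset_Im hmeas hsub, volume_scale_preimage]
  have hBIm : muH (B ∩ Im 0) = volume (Im 0 ∩ B) := by
    rw [Set.inter_comm,
      muH_apply_subset_Im ((measurableSet_Im 0).inter hB) Set.inter_subset_left]
    norm_num
    rw [show (2:ℝ≥0∞) - 1 = 1 by
      rw [← one_add_one_eq_two, ENNReal.add_sub_cancel_right ENNReal.one_ne_top], one_mul]
  rw [hBIm, show k+1+1 = k+2 by omega, div_eq_mul_inv]
  ring

lemma plus_term (P : Measure Om) [IsProbabilityMeasure P]
    (hP : ∀ (m : ℕ) (f : ℕ → Bool), P {ω : Om | ∀ i < m, ω i = f i} = (1/2 : ℝ≥0∞)^m)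
    (n k : ℕ) (A : Set Om) (hA : MeasurableSet A) (B : Set ℝ) (hB : MeasurableSet B) :
    (P.prod muH) ((hitP (k+1) n ∩ shiftOm n ⁻¹' A) ×ˢ
        (Ip (k+1) ∩ (fun x : ℝ => 1 - (2:ℝ)^(k+1) * (1-x)) ⁻¹' B))
      = (((2:ℝ≥0∞)^(k+2) - 1) / 2^(k+1) * P (hitW (k+1) n)) * (P A * muH (B ∩ Ip 0)) := by
  rw [Measure.prod_prod, hitP_indep P hP (k+1) n A hA]
  have hset : Ip (k+1) ∩ (fun x : ℝ => 1 - (2:ℝ)^(k+1) * (1-x)) ⁻¹' B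
      = (fun x : ℝ => 1 - (2:ℝ)^(k+1) * (1-x)) ⁻¹' (Ip 0 ∩ B) := by
    rw [Set.preimage_inter, scale_preimage_Ip]
  rw [hset]
  have hmeasf : Measurable (fun x : ℝ => 1 - (2:ℝ)^(k+1) * (1-x)) := by
    apply Measurable.const_sub
    exact ((measurable_const_sub (1:ℝ)).const_mul ((2:ℝ)^(k+1)))
  have hmeas : MeasurableSet ((fun x : ℝ => 1 - (2:ℝ)^(k+1) * (1-x)) ⁻¹' (Ip 0 ∩ B)) :=
    hmeasf ((measurableSet_Ip 0).inter hB)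
  have hsub : (fun x : ℝ => 1 - (2:ℝ)^(k+1) * (1-x)) ⁻¹' (Ip 0 ∩ B) ⊆ Ip (k+1) := by
    rw [← scale_preimage_Ip k]; exact Set.preimage_mono Set.inter_subset_left
  rw [muH_apply_subset_Ip hmeas hsub, volume_plusmap_preimage]
  have hBIp : muH (B ∩ Ip 0) = volume (Ip 0 ∩ B) := by
    rw [Set.inter_comm,
      muH_apply_subset_Ip ((measurableSet_Ip 0).inter hB) Set.inter_subset_left]
    norm_num
    rw [show (2:ℝ≥0∞) - 1 = 1 by
      rw [← one_add_one_eq_two, ENNReal.add_sub_cancel_right ENNReal.one_ne_top], one_mul]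
  rw [hBIp, show k+1+1 = k+2 by omega, div_eq_mul_inv]
  ring

lemma Um_measure (P : Measure Om) [IsProbabilityMeasure P]
    (hP : ∀ (m : ℕ) (f : ℕ → Bool), P {ω : Om | ∀ i < m, ω i = f i} = (1/2 : ℝ≥0∞)^m)
    (n : ℕ) (A : Set Om) (hA : MeasurableSet A) (B : Set ℝ) (hB : MeasurableSet B) :
    (P.prod muH) (Um n A B) = cH P n * (P A * muH (B ∩ Im 0)) := by
  rw [Um, measure_iUnion ?_ ?_]
  · rw [tsum_congr (fun k => minus_term P hP n k A hA B hB), ENNReal.tsum_mul_right]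
    rfl
  · intro i j hij
    refine Set.disjoint_left.mpr ?_
    rintro ⟨ω, x⟩ hqi hqj
    exact Set.disjoint_left.mp (Im_disjoint (show i+1 ≠ j+1 by omega)) hqi.2.1 hqj.2.1
  · intro k
    exact ((measurableSet_hitW _ _).inter (measurable_shiftOm n hA)).prod
      ((measurableSet_Im _).inter ((measurable_id.const_mul ((2:ℝ)^(k+1))) hB))

lemma Up_measure (P : Measure Om) [IsProbabilityMeasure P]
    (hP : ∀ (m : ℕ) (f : ℕ → Bool), P {ω : Om | ∀ i < m, ω i = f i} = (1/2 : ℝ≥0∞)^m)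
    (n : ℕ) (A : Set Om) (hA : MeasurableSet A) (B : Set ℝ) (hB : MeasurableSet B) :
    (P.prod muH) (Up n A B) = cH P n * (P A * muH (B ∩ Ip 0)) := by
  rw [Up, measure_iUnion ?_ ?_]
  · rw [tsum_congr (fun k => plus_term P hP n k A hA B hB), ENNReal.tsum_mul_right]
    rfl
  · intro i j hij
    refine Set.disjoint_left.mpr ?_
    rintro ⟨ω, x⟩ hqi hqj
    exact Set.disjoint_left.mp (Ip_disjoint (show i+1 ≠ j+1 by omega)) hqi.2.1 hqj.2.1
  · intro k
    have hmeasf : Measurable (fun x : ℝ => 1 - (2:ℝ)^(k+1) * (1-x)) := by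
      apply Measurable.const_sub
      exact ((measurable_const_sub (1:ℝ)).const_mul ((2:ℝ)^(k+1)))
    exact ((measurableSet_hitP _ _).inter (measurable_shiftOm n hA)).prod
      ((measurableSet_Ip _).inter (hmeasf hB))

lemma Um_measurable (n : ℕ) {A : Set Om} (hA : MeasurableSet A) {B : Set ℝ}
    (hB : MeasurableSet B) : MeasurableSet (Um n A B) :=
  MeasurableSet.iUnion fun k =>
    ((measurableSet_hitW _ _).inter (measurable_shiftOm n hA)).prod
      ((measurableSet_Im _).inter ((measurable_id.const_mul ((2:ℝ)^(k+1))) hB))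

lemma Up_measurable (n : ℕ) {A : Set Om} (hA : MeasurableSet A) {B : Set ℝ}
    (hB : MeasurableSet B) : MeasurableSet (Up n A B) :=
  MeasurableSet.iUnion fun k =>
    ((measurableSet_hitP _ _).inter (measurable_shiftOm n hA)).prod
      ((measurableSet_Ip _).inter
        ((Measurable.const_sub ((measurable_const_sub (1:ℝ)).const_mul ((2:ℝ)^(k+1))) 1) hB))

lemma hataDensity_zero {x : ℝ} (hx : x ∉ ⋃ k, Im k ∪ Ip k) : hataDensity x = 0 := by
  rw [hataDensity, ENNReal.tsum_eq_zero]
  intro k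
  rw [Set.indicator_of_notMem (fun hk => hx (Set.mem_iUnion.mpr ⟨k, hk⟩)), mul_zero]

lemma E_meas : MeasurableSet (⋃ k, Im k ∪ Ip k) :=
  MeasurableSet.iUnion fun k => (measurableSet_Im k).union (measurableSet_Ip k)

lemma E_compl_null : muH ((⋃ k, Im k ∪ Ip k)ᶜ) = 0 := by
  rw [muH, withDensity_apply _ E_meas.compl,
    setLIntegral_congr_fun E_meas.compl (fun x hx => hataDensity_zero hx)]
  simp

lemma muH_BJ {B : Set ℝ} (hB : MeasurableSet B) :
    muH (B ∩ J) = muH (B ∩ Im 0) + muH (B ∩ Ip 0) := by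
  have e2 : (1:ℝ)/2^(0+2) = 1/4 := by norm_num
  have e1 : (1:ℝ)/2^(0+1) = 1/2 := by norm_num
  have e1' : 1 - (1:ℝ)/2^(0+1) = 1/2 := by norm_num
  have e2' : 1 - (1:ℝ)/2^(0+2) = 3/4 := by norm_num
  have hae : (B ∩ J : Set ℝ) =ᵐ[muH] (((B ∩ Im 0) ∪ (B ∩ Ip 0) : Set ℝ)) := by
    refine ae_eq_set.mpr ⟨?_, ?_⟩
    · refine measure_mono_null ?_ (muH_countable_null (Set.countable_singleton (1/2 : ℝ)))
      rintro x ⟨⟨hxB, hxJ⟩, hnx⟩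
      have h1 : x ∉ Im 0 := fun h => hnx (Or.inl ⟨hxB, h⟩)
      have h2 : x ∉ Ip 0 := fun h => hnx (Or.inr ⟨hxB, h⟩)
      obtain ⟨hJ1, hJ2⟩ := hxJ
      rcases lt_trichotomy x (1/2 : ℝ) with h | h | h
      · exact absurd (⟨by rw [e2]; exact hJ1, by rw [e1]; exact h⟩ : x ∈ Im 0) h1
      · exact h
      · exact absurd (⟨by rw [e1']; exact h, by rw [e2']; exact hJ2⟩ : x ∈ Ip 0) h2
    · rw [Set.diff_eq_empty.mpr, measure_empty]
      exact Set.union_subset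
        (fun x hx => ⟨hx.1, Im_zero_subset_J hx.2⟩)
        (fun x hx => ⟨hx.1, Ip_zero_subset_J hx.2⟩)
  rw [measure_congr hae,
    measure_union ((Im_Ip_disjoint 0 0).mono Set.inter_subset_right Set.inter_subset_right)
      (hB.inter (measurableSet_Ip 0))]


/-- For the Hata skew product with `p = 1/2` and every `n ≥ 1`, every measurable `A ⊆ Ω` and
Borel `B ⊆ [0,1]`, `μ̃(J̃_n ∩ R̃^± ∩ T̃^{-n}(A×B)) = c_n·P(A)·μ(B ∩ I_0^±)`, and consequently
`μ̃(J̃_n ∩ T̃^{-n}(A×B)) = c_n·P(A)·μ(B ∩ J)`. -/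
theorem hata_skew_perron_frobenius (P : Measure Om) [IsProbabilityMeasure P]
    (hP : ∀ (n : ℕ) (f : ℕ → Bool), P {ω : Om | ∀ i < n, ω i = f i} = (1/2 : ℝ≥0∞)^n)
    (muT : Measure (Om × ℝ)) (hmuT : muT = P.prod muH)
    (n : ℕ) (hn : 1 ≤ n)
    (A : Set Om) (hA : MeasurableSet A) (B : Set ℝ) (hB : MeasurableSet B) :
    muT (Jn n ∩ (Set.univ ×ˢ Rm) ∩ Ttilde^[n] ⁻¹' (A ×ˢ B)) = cH P n * P A * muH (B ∩ Im 0)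
    ∧ muT (Jn n ∩ (Set.univ ×ˢ Rp) ∩ Ttilde^[n] ⁻¹' (A ×ˢ B)) = cH P n * P A * muH (B ∩ Ip 0)
    ∧ muT (Jn n ∩ Ttilde^[n] ⁻¹' (A ×ˢ B)) = cH P n * P A * muH (B ∩ J) := by
  subst hmuT
  refine ⟨?_, ?_, ?_⟩
  · rw [measure_congr (minus_ae P hn A B), Um_measure P hP n A hA B hB, ← mul_assoc]
  · rw [measure_congr (plus_ae P hn A B), Up_measure P hP n A hA B hB, ← mul_assoc]
  · have hFS : (Jn n ∩ Ttilde^[n] ⁻¹' (A ×ˢ B) : Set (Om × ℝ)) =ᵐ[P.prod muH]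
        (((Jn n ∩ (Set.univ ×ˢ Rm) ∩ Ttilde^[n] ⁻¹' (A ×ˢ B)) ∪
          (Jn n ∩ (Set.univ ×ˢ Rp) ∩ Ttilde^[n] ⁻¹' (A ×ˢ B))) : Set (Om × ℝ)) := by
      refine ae_eq_set.mpr ⟨?_, ?_⟩
      · refine measure_mono_null
          (?_ : _ ⊆ Set.univ ×ˢ ((⋃ k, Im k ∪ Ip k)ᶜ)) ?_
        · rintro ⟨ω, x⟩ ⟨⟨hJn, hpre⟩, hnU⟩
          refine ⟨Set.mem_univ _, ?_⟩
          intro hxE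
          obtain ⟨k, hk⟩ := Set.mem_iUnion.mp hxE
          cases k with
          | zero =>
            cases hk with
            | inl h => exact hJn.1 (mem_Jt_iff.mpr (Im_zero_subset_J h))
            | inr h => exact hJn.1 (mem_Jt_iff.mpr (Ip_zero_subset_J h))
          | succ k =>
            cases hk with
            | inl h => exact hnU (Or.inl ⟨⟨hJn, ⟨Set.mem_univ _, Im_succ_subset_Rm k h⟩⟩, hpre⟩)
            | inr h => exact hnU (Or.inr ⟨⟨hJn, ⟨Set.mem_univ _, Ip_succ_subset_Rp k h⟩⟩, hpre⟩)
        · rw [Measure.prod_prod, E_compl_null, mul_zero]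
      · rw [Set.diff_eq_empty.mpr, measure_empty]
        exact Set.union_subset
          (fun q hq => ⟨hq.1.1, hq.2⟩)
          (fun q hq => ⟨hq.1.1, hq.2⟩)
    have hFae := hFS.trans (ae_eq_set_union (minus_ae P hn A B) (plus_ae P hn A B))
    have hdisj : Disjoint (Um n A B) (Up n A B) := by
      refine Set.disjoint_left.mpr fun q hqm hqp => ?_
      have h1 := (Um_subset n A B hqm).2
      have h2 := (Up_subset n A B hqp).2
      have := h1.2
      have := h2.1
      linarith
    rw [measure_congr hFae, measure_union hdisj (Up_measurable n hA hB),
      Um_measure P hP n A hA B hB, Up_measure P hP n A hA B hB, muH_BJ hB]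
    ring


end
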